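/- arXiv:1405.4465 — 5 statements merged into one kernel-verified Lean document; each statement's English description precedes it below -/
import Mathlib

section
/- Let F_x, F_y, F_xx, F_xy, F_yy, a_2, b_2 be real numbers with (F_x, F_y) ≠ (0,0), and set a_1 = −F_y and b_1 = F_x. If F_x·a_2 + F_y·b_2 + F_xx·a_1² + 2·F_xy·a_1·b_1 + F_yy·b_1² = 0, then |a_1·b_2 − a_2·b_1| / (a_1² + b_1²)^{3/2} = |F_xx·F_y² − 2·F_xy·F_x·F_y + F_yy·F_x²| / (F_x² + F_y²)^{3/2}. -/
/-- Theorem 1 of the paper (algebraic content): at a regular point of a plane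
algebraic curve, the curvature computed by Algorithm 1 from the quadratic
parametric curve with tangent `(-F_y, F_x)` and second-order contact condition
`C₂ = 0` agrees with the classical implicit-curve curvature formula. -/
theorem curvature_regular_point_plane_curve
    (Fx Fy Fxx Fxy Fyy a2 b2 : ℝ) (hgrad : (Fx, Fy) ≠ (0, 0))
    (a1 b1 : ℝ) (ha1 : a1 = -Fy) (hb1 : b1 = Fx)
    (hC2 : Fx * a2 + Fy * b2 + Fxx * a1 ^ 2 + 2 * Fxy * a1 * b1 + Fyy * b1 ^ 2 = 0) :
    |a1 * b2 - a2 * b1| / (a1 ^ 2 + b1 ^ 2) ^ ((3 : ℝ) / 2)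
      = |Fxx * Fy ^ 2 - 2 * Fxy * Fx * Fy + Fyy * Fx ^ 2|
          / (Fx ^ 2 + Fy ^ 2) ^ ((3 : ℝ) / 2) := by
  rw [ha1, hb1] at hC2 ⊢
  have hnum : -Fy * b2 - a2 * Fx = Fxx * Fy ^ 2 - 2 * Fxy * Fx * Fy + Fyy * Fx ^ 2 := by
    linear_combination -hC2
  rw [hnum]
  ring_nf
end

section
/- Let F : ℝ² → ℝ be twice continuously differentiable, let P ∈ ℝ² satisfy the gradient condition ∇F(P) ≠ 0, write F_x, F_y, F_xx, F_xy, F_yy for the values of the partial derivatives of F at P, and let w = (w_1, w_2) ∈ ℝ². Define the quadratic curve r : ℝ → ℝ² by r(t) = P + t·(−F_y, F_x) + (t²/2)·w. If the second derivative of the composite t ↦ F(r(t)) vanishes at t = 0, then the curvature of r at t = 0, namely |(−F_y)·w_2 − w_1·F_x| / (F_x² + F_y²)^{3/2}, equals |F_xx·F_y² − 2·F_xy·F_x·F_y + F_yy·F_x²| / (F_x² + F_y²)^{3/2}. -/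
/-- Theorem 1 of the paper for a C² function: the quadratic parametric curve
through a regular point `P` of the implicit curve `F = 0` with tangent
`(-F_y, F_x)` and second-order contact (`C₂ = 0`) has the curvature given by
the implicit-curve formula `|Tan(F)·H(F)·Tan(F)ᵀ|/|∇F|³`. -/
theorem curvature_regular_point_implicit_curve
    (F : ℝ × ℝ → ℝ) (hF : ContDiff ℝ 2 F)
    (P : ℝ × ℝ) (hgrad : fderiv ℝ F P ≠ 0)
    (Fx Fy Fxx Fxy Fyy : ℝ)
    (hFx : Fx = fderiv ℝ F P (1, 0))
    (hFy : Fy = fderiv ℝ F P (0, 1))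
    (hFxx : Fxx = fderiv ℝ (fun p => fderiv ℝ F p (1, 0)) P (1, 0))
    (hFxy : Fxy = fderiv ℝ (fun p => fderiv ℝ F p (0, 1)) P (1, 0))
    (hFyy : Fyy = fderiv ℝ (fun p => fderiv ℝ F p (0, 1)) P (0, 1))
    (w : ℝ × ℝ)
    (r : ℝ → ℝ × ℝ)
    (hr : r = fun t => P + t • ((-Fy, Fx) : ℝ × ℝ) + (t ^ 2 / 2) • w)
    (hC2 : deriv (deriv (fun t => F (r t))) 0 = 0) :
    |(-Fy) * w.2 - w.1 * Fx| / (Fx ^ 2 + Fy ^ 2) ^ ((3 : ℝ) / 2)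
      = |Fxx * Fy ^ 2 - 2 * Fxy * Fx * Fy + Fyy * Fx ^ 2|
          / (Fx ^ 2 + Fy ^ 2) ^ ((3 : ℝ) / 2) := by
  set v : ℝ × ℝ := (-Fy, Fx) with hv
  have hFd : Differentiable ℝ F := hF.differentiable (by norm_num)
  have hF1 : ContDiff ℝ 1 (fun p => fderiv ℝ F p) := hF.fderiv_right (by norm_num)
  have hr0 : r 0 = P := by simp [hr]
  have hr' : ∀ t, HasDerivAt r (v + t • w) t := by
    intro t
    rw [hr]
    have h1 : HasDerivAt (fun t : ℝ => t • v) ((1 : ℝ) • v) t :=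
      (hasDerivAt_id t).smul_const v
    have h2 : HasDerivAt (fun t : ℝ => (t ^ 2 / 2) • w)
        (((↑2 * t ^ (2 - 1)) / 2) • w) t :=
      ((hasDerivAt_pow 2 t).div_const 2).smul_const w
    have := (h1.const_add P).add h2
    exact this.congr_deriv (by simp)
  have hg : ∀ t, HasDerivAt (fun t => F (r t)) (fderiv ℝ F (r t) (v + t • w)) t :=
    fun t => (hFd (r t)).hasFDerivAt.comp_hasDerivAt t (hr' t)
  have hderiv : deriv (fun t => F (r t)) = fun t => fderiv ℝ F (r t) (v + t • w) :=
    funext fun t => (hg t).deriv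
  have hc : HasDerivAt (fun t => fderiv ℝ F (r t))
      (fderiv ℝ (fderiv ℝ F) (r 0) (v + (0 : ℝ) • w)) 0 :=
    ((hF1.differentiable (by norm_num)) (r 0)).hasFDerivAt.comp_hasDerivAt 0 (hr' 0)
  have hu : HasDerivAt (fun t : ℝ => v + t • w) ((1 : ℝ) • w) 0 :=
    ((hasDerivAt_id (0 : ℝ)).smul_const w).const_add v
  have h2 := (hc.clm_apply hu).deriv
  rw [← hderiv] at h2
  rw [h2, hr0] at hC2
  simp only [zero_smul, add_zero, one_smul] at hC2
  -- hC2 : D²F P v v + DF P w = 0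
  -- coordinates
  have hsym : ∀ a b : ℝ × ℝ, fderiv ℝ (fderiv ℝ F) P a b = fderiv ℝ (fderiv ℝ F) P b a :=
    hF.contDiffAt.isSymmSndFDerivAt (by norm_num)
  have hmix : ∀ e : ℝ × ℝ, ∀ e' : ℝ × ℝ,
      fderiv ℝ (fun p => fderiv ℝ F p e) P e' = fderiv ℝ (fderiv ℝ F) P e' e := by
    intro e e'
    have hD : HasFDerivAt (fderiv ℝ F) (fderiv ℝ (fderiv ℝ F) P) P :=
      ((hF1.differentiable (by norm_num)) P).hasFDerivAt
    have h := ((ContinuousLinearMap.apply ℝ ℝ e).hasFDerivAt (x := fderiv ℝ F P)).comp P hD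
    rw [show (fun p => (fderiv ℝ F p) e) = (⇑((ContinuousLinearMap.apply ℝ ℝ) e) ∘ fderiv ℝ F) from rfl, h.fderiv]
    rfl
  have hde : ∀ a : ℝ × ℝ, a = a.1 • ((1, 0) : ℝ × ℝ) + a.2 • ((0, 1) : ℝ × ℝ) := by
    intro a; simp [Prod.ext_iff]
  have hlin : ∀ (L : ℝ × ℝ →L[ℝ] ℝ) (a : ℝ × ℝ),
      L a = a.1 * L (1, 0) + a.2 * L (0, 1) := by
    intro L a
    have h : L a = L (a.1 • ((1, 0) : ℝ × ℝ) + a.2 • ((0, 1) : ℝ × ℝ)) := by rw [← hde a]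
    rw [h, map_add, map_smul, map_smul, smul_eq_mul, smul_eq_mul]
  have hDw : fderiv ℝ F P w = w.1 * Fx + w.2 * Fy := by
    rw [hlin (fderiv ℝ F P) w, hFx, hFy]
  set B := fderiv ℝ (fderiv ℝ F) P with hB
  have hFxx' : Fxx = B (1,0) (1,0) := by rw [hFxx, hmix]
  have hFxy' : Fxy = B (1,0) (0,1) := by rw [hFxy, hmix]
  have hFyy' : Fyy = B (0,1) (0,1) := by rw [hFyy, hmix]
  have hQ : B v v = Fxx * Fy ^ 2 - 2 * Fxy * Fx * Fy + Fyy * Fx ^ 2 := by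
    have e1 : B v v
        = v.1 * (v.1 * B (1,0) (1,0) + v.2 * B (1,0) (0,1))
          + v.2 * (v.1 * B (0,1) (1,0) + v.2 * B (0,1) (0,1)) := by
      conv_lhs => rw [hde v]
      simp only [map_add, map_smul, ContinuousLinearMap.add_apply,
        ContinuousLinearMap.smul_apply, smul_eq_mul]
      ring
    rw [e1, hsym (0,1) (1,0), ← hFxx', ← hFxy', ← hFyy']
    have h1 : v.1 = -Fy := by rw [hv]
    have h2 : v.2 = Fx := by rw [hv]
    rw [h1, h2]; ring
  rw [hDw, hQ] at hC2
  congr 1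
  have : (-Fy) * w.2 - w.1 * Fx = Fxx * Fy ^ 2 - 2 * Fxy * Fx * Fy + Fyy * Fx ^ 2 := by
    linarith
  rw [this]
end

section
/- Let H be a symmetric 3×3 real matrix, let r_s, r_t, r_ss, r_st, r_tt ∈ ℝ³, set g = r_s ×₃ r_t, and assume g ≠ 0. Assume r_ss·g = −r_sᵀHr_s, r_st·g = −r_sᵀHr_t, and r_tt·g = −r_tᵀHr_t. Define E = r_s·r_s, F = r_s·r_t, G = r_t·r_t, n = g/‖g‖, L = r_ss·n, M = r_st·n, N = r_tt·n. Then (L·N − M²)/(E·G − F²) = (gᵀ · adj(H) · g)/‖g‖⁴. -/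
open Matrix

set_option maxHeartbeats 1000000

/-- Gauss-curvature part of Theorem 2 of the paper: a quadratic parametric
surface with second-order contact with an implicit surface at a regular point
(gradient `g`, Hessian `H`) has Gauss curvature `(LN − M²)/(EG − F²)` equal to
Goldman's formula `(g · adj(H) · g)/‖g‖⁴`. -/
theorem gauss_curvature_regular_point_implicit_surface
    (H : Matrix (Fin 3) (Fin 3) ℝ) (hH : H.IsSymm)
    (rs rt rss rst rtt : Fin 3 → ℝ)
    (g : Fin 3 → ℝ) (hg : g = rs ⨯₃ rt) (hg0 : g ≠ 0)
    (hss : rss ⬝ᵥ g = -(rs ⬝ᵥ H *ᵥ rs))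
    (hst : rst ⬝ᵥ g = -(rs ⬝ᵥ H *ᵥ rt))
    (htt : rtt ⬝ᵥ g = -(rt ⬝ᵥ H *ᵥ rt))
    (E F G L M N : ℝ) (n : Fin 3 → ℝ)
    (hE : E = rs ⬝ᵥ rs) (hF : F = rs ⬝ᵥ rt) (hG : G = rt ⬝ᵥ rt)
    (hn : n = (Real.sqrt (g ⬝ᵥ g))⁻¹ • g)
    (hL : L = rss ⬝ᵥ n) (hM : M = rst ⬝ᵥ n) (hN : N = rtt ⬝ᵥ n) :
    (L * N - M ^ 2) / (E * G - F ^ 2)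
      = (g ⬝ᵥ H.adjugate *ᵥ g) / (Real.sqrt (g ⬝ᵥ g)) ^ 4 := by
  set q : ℝ := g ⬝ᵥ g with hqdef
  have hq : 0 < q := lt_of_le_of_ne
    (Finset.sum_nonneg fun i _ => mul_self_nonneg (g i))
    (Ne.symm ((dotProduct_self_eq_zero (v := g)).not.mpr hg0))
  set s : ℝ := Real.sqrt q with hsdef
  have hs2 : s ^ 2 = q := Real.sq_sqrt hq.le
  have hs : 0 < s := Real.sqrt_pos.mpr hq
  -- Lagrange identity: EG − F² = |g|²
  have lag : E * G - F ^ 2 = q := by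
    subst hE hF hG
    simp only [hqdef, hg, cross_apply, dotProduct, Fin.sum_univ_three,
      Matrix.cons_val_zero, Matrix.cons_val_one, Matrix.head_cons,
      Matrix.cons_val_two, Matrix.tail_cons]
    ring
  -- key polynomial identity
  have key : (rs ⬝ᵥ H *ᵥ rs) * (rt ⬝ᵥ H *ᵥ rt) - (rs ⬝ᵥ H *ᵥ rt) ^ 2
      = g ⬝ᵥ H.adjugate *ᵥ g := by
    have h01 : H 1 0 = H 0 1 := hH.apply 0 1
    have h02 : H 2 0 = H 0 2 := hH.apply 0 2
    have h12 : H 2 1 = H 1 2 := hH.apply 1 2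
    simp only [hg, cross_apply, Matrix.adjugate_fin_three, Matrix.mulVec,
      dotProduct, Fin.sum_univ_three, Matrix.cons_val_zero,
      Matrix.cons_val_one, Matrix.head_cons, Matrix.cons_val_two,
      Matrix.tail_cons, Matrix.cons_val', Matrix.empty_val',
      Matrix.cons_val_fin_one, Matrix.head_fin_const, Matrix.of_apply,
      h01, h02, h12]
    ring
  have hLc : L = s⁻¹ * (rss ⬝ᵥ g) := by
    rw [hL, hn]; simp [dotProduct_smul, smul_eq_mul]
  have hMc : M = s⁻¹ * (rst ⬝ᵥ g) := by
    rw [hM, hn]; simp [dotProduct_smul, smul_eq_mul]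
  have hNc : N = s⁻¹ * (rtt ⬝ᵥ g) := by
    rw [hN, hn]; simp [dotProduct_smul, smul_eq_mul]
  rw [hLc, hMc, hNc, hss, hst, htt, lag, ← key]
  have h4 : s ^ 4 = q ^ 2 := by rw [← hs2]; ring
  set X := rs ⬝ᵥ H *ᵥ rs
  set Y := rt ⬝ᵥ H *ᵥ rt
  set Z := rs ⬝ᵥ H *ᵥ rt
  have hstep : s⁻¹ * -X * (s⁻¹ * -Y) - (s⁻¹ * -Z) ^ 2 = (X * Y - Z ^ 2) / q := by
    rw [← hs2]; field_simp
  rw [hstep, div_div, h4]; ring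
end

section
/- Let H be a symmetric 3×3 real matrix and let u, v ∈ ℝ³. Then (u·u)·(vᵀHv) − 2·(u·v)·(uᵀHv) + (v·v)·(uᵀHu) = tr(H)·‖u ×₃ v‖² − (u ×₃ v)ᵀ · H · (u ×₃ v). -/
open Matrix

/-- Algebraic core of the `EN − 2FM + GL` computation in Theorem 2 of the
paper: the mean-curvature numerator reduces to the quadratic form of `H` at
the normal `u × v` and the trace of `H`. -/
theorem mean_curvature_numerator_identity
    (H : Matrix (Fin 3) (Fin 3) ℝ) (hH : H.IsSymm) (u v : Fin 3 → ℝ) :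
    (u ⬝ᵥ u) * (v ⬝ᵥ H *ᵥ v) - 2 * (u ⬝ᵥ v) * (u ⬝ᵥ H *ᵥ v)
        + (v ⬝ᵥ v) * (u ⬝ᵥ H *ᵥ u)
      = H.trace * ((u ⨯₃ v) ⬝ᵥ (u ⨯₃ v)) - (u ⨯₃ v) ⬝ᵥ H *ᵥ (u ⨯₃ v) := by
  have h : ∀ i j, H j i = H i j := fun i j => hH.apply i j
  simp [crossProduct, dotProduct, mulVec, Matrix.trace, Matrix.diag,
    Fin.sum_univ_three]
  rw [h 0 1, h 0 2, h 1 2]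
  ring
end

section
/- Let A and B be symmetric 3×3 real matrices, let f, g ∈ ℝ³, and set u = f ×₃ g. Let M be the 3×3 real matrix whose i-th column is (A·e_i) ×₃ g − (B·e_i) ×₃ f, where e_1, e_2, e_3 is the standard basis of ℝ³. Then Mᵀ·f = −A·u and Mᵀ·g = −B·u; consequently the vector r″ := M·u satisfies r″·f = −uᵀAu and r″·g = −uᵀBu. -/
open Matrix

/-- Key lemma in the proof of Theorem 3 of the paper: for the matrix `M` whose
`i`-th column is `(A·eᵢ) × g − (B·eᵢ) × f` (the paper's
`∇(∇F×∇G) = H(F)×∇G − H(G)×∇F`), one has `Mᵀ·f = −A·u` and `Mᵀ·g = −B·u` with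
`u = f × g`; consequently `r″ = M·u` satisfies the second-order contact
conditions `r″·f = −uᵀAu` and `r″·g = −uᵀBu`. -/
theorem grad_cross_matrix_contact_conditions
    (A B : Matrix (Fin 3) (Fin 3) ℝ) (hA : A.IsSymm) (hB : B.IsSymm)
    (f g : Fin 3 → ℝ) (u : Fin 3 → ℝ) (hu : u = f ⨯₃ g)
    (M : Matrix (Fin 3) (Fin 3) ℝ)
    (hM : M = Matrix.of fun i j =>
      ((A *ᵥ Pi.single j 1) ⨯₃ g - (B *ᵥ Pi.single j 1) ⨯₃ f) i) :
    Mᵀ *ᵥ f = -(A *ᵥ u) ∧ Mᵀ *ᵥ g = -(B *ᵥ u) ∧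
      (M *ᵥ u) ⬝ᵥ f = -(u ⬝ᵥ A *ᵥ u) ∧ (M *ᵥ u) ⬝ᵥ g = -(u ⬝ᵥ B *ᵥ u) := by
  have hA' : ∀ i j, A j i = A i j := fun i j => hA.apply i j
  have hB' : ∀ i j, B j i = B i j := fun i j => hB.apply i j
  subst hu hM
  refine ⟨?_, ?_, ?_, ?_⟩ <;>
  · first
    | (ext i; fin_cases i <;>
        simp [mulVec, dotProduct, cross_apply, Fin.sum_univ_three, transpose,
          Pi.single, Function.update, hA' 0 1, hA' 0 2, hA' 1 2, hB' 0 1, hB' 0 2, hB' 1 2] <;> ring)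
    | (simp [mulVec, dotProduct, cross_apply, Fin.sum_univ_three, transpose,
          Pi.single, Function.update, hA' 0 1, hA' 0 2, hA' 1 2, hB' 0 1, hB' 0 2, hB' 1 2]; ring)
end
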